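/- Suppose $A$ admits a normalized invariant integral $w_G$. For finite-dimensional $A$-comodules $(V, \rho_V)$ and $(W, \rho_W)$, let $\mathrm{Hom}^G(V,W)$ denote the space of $K$-linear maps $f : V \to W$ satisfying $\rho_W \circ f = (f \otimes \mathrm{id}_A) \circ \rho_V$. Then $w_G\big( S(\chi_V)\, \chi_W \big) = (\dim_K \mathrm{Hom}^G(V,W)) \cdot 1_K$, where the product $S(\chi_V)\,\chi_W$ is taken in $A$. -/

import Mathlib

open TensorProduct

noncomputable section

variable {K : Type} [Field K] {A : Type} [CommRing A] [HopfAlgebra K A]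

/-- Convolution product on the dual of a coalgebra:
`(w * w') a = ∑ w a₍₁₎ * w' a₍₂₎`. -/
def conv (w w' : Module.Dual K A) : Module.Dual K A :=
  (LinearMap.mul' K K).comp ((TensorProduct.map w w').comp (Coalgebra.comul (R := K)))

/-- Left convolution by `u`, as a linear endomorphism of the dual. -/
def convL (u : Module.Dual K A) : Module.Dual K A →ₗ[K] Module.Dual K A where
  toFun := conv u
  map_add' x y := by
    unfold conv
    rw [TensorProduct.map_add_right, LinearMap.add_comp, LinearMap.comp_add]
  map_smul' c x := by
    show (LinearMap.mul' K K).comp ((TensorProduct.map u (c • x)).comp (Coalgebra.comul (R := K))) =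
      c • (LinearMap.mul' K K).comp ((TensorProduct.map u x).comp (Coalgebra.comul (R := K)))
    rw [TensorProduct.map_smul_right, LinearMap.smul_comp, LinearMap.comp_smul]

/-- The span of `{u * w' : w' ∈ A*}`. -/
def rightOrbit (u : Module.Dual K A) : Submodule K (Module.Dual K A) :=
  Submodule.span K {x | ∃ w', x = conv u w'}

lemma rightOrbit_mapsTo (u : Module.Dual K A) :
    ∀ x ∈ rightOrbit u, convL u x ∈ rightOrbit u := by
  intro x hx
  have h : Submodule.map (convL u) (rightOrbit u) ≤ rightOrbit u := by
    rw [rightOrbit, Submodule.map_span]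
    apply Submodule.span_mono
    rintro y ⟨x, ⟨w', rfl⟩, rfl⟩
    exact ⟨conv u w', rfl⟩
  exact h ⟨x, hx, rfl⟩

/-- The trace of the finite-rank operator "left convolution by `u`", computed as the trace of
its restriction to the finite-dimensional invariant subspace `u * A*` containing its image. -/
def convTrace (u : Module.Dual K A) : K :=
  LinearMap.trace K (rightOrbit u) ((convL u).restrict (rightOrbit_mapsTo u))

/-- The span of `{w₁ * w * w₂ : w₁, w₂ ∈ A*}`. -/
def twoSidedOrbit (w : Module.Dual K A) : Submodule K (Module.Dual K A) :=
  Submodule.span K {x | ∃ w₁ w₂, x = conv w₁ (conv w w₂)}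

/-- `Ã = {w ∈ A* : dim_K (A* * w * A*) < ∞}`. -/
def tildeSet (K : Type) [Field K] (A : Type) [CommRing A] [HopfAlgebra K A] :
    Set (Module.Dual K A) :=
  {w | FiniteDimensional K (twoSidedOrbit w)}

/-- A normalized invariant integral on `G = Spec A`:  `w_G(1) = 1` and
`w * w_G = w(1) w_G = w_G * w` for all `w ∈ A*`. -/
def IsNormalizedIntegral (wG : Module.Dual K A) : Prop :=
  wG 1 = 1 ∧ ∀ w : Module.Dual K A, conv w wG = w 1 • wG ∧ conv wG w = w 1 • wG
/-- `(V, ρ)` is an `A`-comodule: coassociativity and counit axioms. -/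
def IsComodule {V : Type} [AddCommGroup V] [Module K V] (ρ : V →ₗ[K] V ⊗[K] A) : Prop :=
  ((TensorProduct.assoc K V A A).toLinearMap.comp ((ρ.rTensor A).comp ρ) =
      (LinearMap.lTensor V (Coalgebra.comul (R := K))).comp ρ) ∧
  ((TensorProduct.rid K V).toLinearMap.comp
      ((LinearMap.lTensor V (Coalgebra.counit (R := K))).comp ρ) = LinearMap.id)

/-- The action of `w ∈ A*` on an `A`-comodule `(V, ρ)`: `w ⋅ v = (id ⊗ w)(ρ v)`.
As a map `π_V : A* → End_K(V)` it is a unital algebra homomorphism. -/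
def coact {V : Type} [AddCommGroup V] [Module K V] (ρ : V →ₗ[K] V ⊗[K] A)
    (w : Module.Dual K A) : V →ₗ[K] V :=
  (TensorProduct.rid K V).toLinearMap.comp ((LinearMap.lTensor V w).comp ρ)

/-- The character of a finite-dimensional comodule, computed with respect to a basis `b`:
`χ_V = ∑ i a_{ii}` where `ρ (b j) = ∑ i b i ⊗ a_{ij}` (independent of the basis). -/
def charOf {V : Type} [AddCommGroup V] [Module K V] {ι : Type} [Fintype ι]
    (b : Module.Basis ι K V) (ρ : V →ₗ[K] V ⊗[K] A) : A :=
  ∑ i, (TensorProduct.lid K A) ((LinearMap.rTensor A (b.coord i)) (ρ (b i)))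

/-- The space `Hom^G(V, W)` of comodule homomorphisms `f : V → W`, i.e. linear maps with
`ρ_W ∘ f = (f ⊗ id) ∘ ρ_V`. -/
def homG {V W : Type} [AddCommGroup V] [Module K V] [AddCommGroup W] [Module K W]
    (ρV : V →ₗ[K] V ⊗[K] A) (ρW : W →ₗ[K] W ⊗[K] A) : Submodule K (V →ₗ[K] W) where
  carrier := {f | ρW.comp f = (f.rTensor A).comp ρV}
  add_mem' := by
    intro f g hf hg
    simp only [Set.mem_setOf_eq] at hf hg ⊢
    rw [LinearMap.comp_add, LinearMap.rTensor_add, LinearMap.add_comp, hf, hg]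
  zero_mem' := by
    simp only [Set.mem_setOf_eq, LinearMap.comp_zero, LinearMap.rTensor_zero,
      LinearMap.zero_comp]
  smul_mem' := by
    intro c f hf
    simp only [Set.mem_setOf_eq] at hf ⊢
    rw [LinearMap.comp_smul, LinearMap.rTensor_smul, LinearMap.smul_comp, hf]


section Helpers
variable {K : Type} [Field K] {A : Type} [CommRing A] [HopfAlgebra K A]

/-- coefficient extraction from `V ⊗ M` along a basis of `V`. -/
def coeff {V : Type} [AddCommGroup V] [Module K V] {ι : Type} (b : Module.Basis ι K V) (i : ι)
    (M : Type) [AddCommGroup M] [Module K M] : V ⊗[K] M →ₗ[K] M :=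
  (TensorProduct.lid K M).toLinearMap ∘ₗ LinearMap.rTensor M (b.coord i)

lemma coeff_tmul {V : Type} [AddCommGroup V] [Module K V] {ι : Type} (b : Module.Basis ι K V) (i : ι)
    {M : Type} [AddCommGroup M] [Module K M] (v : V) (m : M) :
    coeff b i M (v ⊗ₜ m) = b.repr v i • m := by
  simp [coeff, Module.Basis.coord]

lemma expand_basis {V : Type} [AddCommGroup V] [Module K V] {ι : Type} [Fintype ι]
    (b : Module.Basis ι K V) {M : Type} [AddCommGroup M] [Module K M] (x : V ⊗[K] M) :
    x = ∑ i, b i ⊗ₜ coeff b i M x := by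
  induction x using TensorProduct.induction_on with
  | zero => simp
  | tmul v m =>
      conv_lhs => rw [← Module.Basis.sum_repr b v]
      rw [TensorProduct.sum_tmul]
      simp only [coeff_tmul, smul_tmul', tmul_smul]
  | add x y hx hy =>
      simp_rw [map_add, tmul_add, Finset.sum_add_distrib, ← hx, ← hy]

lemma coeff_sum {V : Type} [AddCommGroup V] [Module K V] {ι : Type} [Fintype ι]
    [DecidableEq ι] (b : Module.Basis ι K V) (i : ι) {M : Type} [AddCommGroup M] [Module K M]
    (t : ι → M) : coeff b i M (∑ j, b j ⊗ₜ t j) = t i := by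
  rw [map_sum]
  simp_rw [coeff_tmul, Module.Basis.repr_self]
  simp [Finsupp.single_apply]

variable {V : Type} [AddCommGroup V] [Module K V] {ι : Type} [Fintype ι] [DecidableEq ι]

/-- matrix coefficients of a comodule w.r.t. a basis -/
def coefMat (b : Module.Basis ι K V) (ρ : V →ₗ[K] V ⊗[K] A) (i j : ι) : A :=
  coeff b i A (ρ (b j))

omit [DecidableEq ι] in
lemma rho_basis (b : Module.Basis ι K V) (ρ : V →ₗ[K] V ⊗[K] A) (j : ι) :
    ρ (b j) = ∑ i, b i ⊗ₜ coefMat b ρ i j :=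
  expand_basis b _

lemma comul_coefMat (b : Module.Basis ι K V) {ρ : V →ₗ[K] V ⊗[K] A} (h : IsComodule ρ) (i j : ι) :
    Coalgebra.comul (R := K) (coefMat b ρ i j) = ∑ l, coefMat b ρ i l ⊗ₜ coefMat b ρ l j := by
  have h1 := LinearMap.congr_fun h.1 (b j)
  simp only [LinearMap.comp_apply, LinearEquiv.coe_coe] at h1
  rw [rho_basis b ρ j] at h1
  rw [map_sum, map_sum, map_sum] at h1
  simp only [LinearMap.rTensor_tmul, LinearMap.lTensor_tmul] at h1
  rw [Finset.sum_congr rfl (fun l _ => by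
    rw [rho_basis b ρ l, TensorProduct.sum_tmul, map_sum])] at h1
  simp only [TensorProduct.assoc_tmul] at h1
  rw [Finset.sum_comm] at h1
  simp_rw [← TensorProduct.tmul_sum] at h1
  have := congrArg (coeff b i (A ⊗[K] A)) h1
  rw [coeff_sum, coeff_sum] at this
  exact this.symm

lemma counit_coefMat (b : Module.Basis ι K V) {ρ : V →ₗ[K] V ⊗[K] A} (h : IsComodule ρ) (i j : ι) :
    Coalgebra.counit (R := K) (coefMat b ρ i j) = if i = j then 1 else 0 := by
  have h2 := LinearMap.congr_fun h.2 (b j)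
  simp only [LinearMap.comp_apply, LinearEquiv.coe_coe, LinearMap.id_apply] at h2
  rw [rho_basis b ρ j, map_sum, map_sum] at h2
  simp only [LinearMap.lTensor_tmul, TensorProduct.rid_tmul] at h2
  have := congrArg (fun x => b.repr x i) h2
  simp only [map_sum, map_smul, Module.Basis.repr_self, Finsupp.smul_single, smul_eq_mul, mul_one,
    Finsupp.coe_finset_sum, Finset.sum_apply, Finsupp.single_apply] at this
  rw [Finset.sum_ite_eq' Finset.univ i (fun x => Coalgebra.counit (R := K) (coefMat b ρ x j))] at this
  simp only [Finset.mem_univ, if_true] at this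
  rw [this]
  simp [eq_comm]

lemma antipode_mul_coefMat (b : Module.Basis ι K V) {ρ : V →ₗ[K] V ⊗[K] A} (h : IsComodule ρ)
    (i j : ι) :
    ∑ l, HopfAlgebra.antipode (R := K) (coefMat b ρ i l) * coefMat b ρ l j =
      if i = j then 1 else 0 := by
  have := HopfAlgebra.mul_antipode_rTensor_comul_apply (R := K) (coefMat b ρ i j)
  rw [comul_coefMat b h, map_sum, map_sum] at this
  simp only [LinearMap.rTensor_tmul, LinearMap.mul'_apply] at this
  rw [this, counit_coefMat b h]
  split <;> simp

lemma mul_antipode_coefMat (b : Module.Basis ι K V) {ρ : V →ₗ[K] V ⊗[K] A} (h : IsComodule ρ)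
    (i j : ι) :
    ∑ l, coefMat b ρ i l * HopfAlgebra.antipode (R := K) (coefMat b ρ l j) =
      if i = j then 1 else 0 := by
  have := HopfAlgebra.mul_antipode_lTensor_comul_apply (R := K) (coefMat b ρ i j)
  rw [comul_coefMat b h, map_sum, map_sum] at this
  simp only [LinearMap.lTensor_tmul, LinearMap.mul'_apply] at this
  rw [this, counit_coefMat b h]
  split <;> simp

end Helpers

section Helpers2
variable {K : Type} [Field K] {A : Type} [CommRing A] [HopfAlgebra K A]
variable {V : Type} [AddCommGroup V] [Module K V] {ι : Type} [Fintype ι] [DecidableEq ι]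

lemma comul_antipode_coefMat (b : Module.Basis ι K V) {ρ : V →ₗ[K] V ⊗[K] A} (h : IsComodule ρ)
    (i j : ι) :
    Coalgebra.comul (R := K) (HopfAlgebra.antipode (R := K) (coefMat b ρ i j)) =
      ∑ t, HopfAlgebra.antipode (R := K) (coefMat b ρ t j) ⊗ₜ
        HopfAlgebra.antipode (R := K) (coefMat b ρ i t) := by
  set S : A →ₗ[K] A := HopfAlgebra.antipode (R := K) with hS
  set c : ι → ι → A := coefMat b ρ with hc
  let M1 : Matrix ι ι (A ⊗[K] A) := fun p q => c p q ⊗ₜ 1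
  let M2 : Matrix ι ι (A ⊗[K] A) := fun p q => (1 : A) ⊗ₜ c p q
  let M1' : Matrix ι ι (A ⊗[K] A) := fun p q => S (c p q) ⊗ₜ 1
  let M2' : Matrix ι ι (A ⊗[K] A) := fun p q => (1 : A) ⊗ₜ S (c p q)
  let N : Matrix ι ι (A ⊗[K] A) := fun p q => Coalgebra.comul (R := K) (S (c p q))
  let M : Matrix ι ι (A ⊗[K] A) := fun p q => Coalgebra.comul (R := K) (c p q)
  have hM : M = M1 * M2 := by
    ext p q
    rw [Matrix.mul_apply]
    simp only [M, M1, M2, Matrix.mul_apply, Algebra.TensorProduct.tmul_mul_tmul, one_mul,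
      mul_one]
    rw [comul_coefMat b h]
  have hNM : N * M = 1 := by
    ext p q
    rw [Matrix.mul_apply, Matrix.one_apply]
    simp only [N, M, Matrix.mul_apply, ← Bialgebra.comul_mul, ← map_sum]
    rw [antipode_mul_coefMat b h]
    split <;> simp
  have hM1 : M1 * M1' = 1 := by
    ext p q
    rw [Matrix.mul_apply]
    simp only [M1, M1', Matrix.mul_apply, Algebra.TensorProduct.tmul_mul_tmul, one_mul,
      ← TensorProduct.sum_tmul]
    rw [mul_antipode_coefMat b h, Matrix.one_apply]
    split <;> simp [Algebra.TensorProduct.one_def]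
  have hM2 : M2 * M2' = 1 := by
    ext p q
    rw [Matrix.mul_apply]
    simp only [M2, M2', Matrix.mul_apply, Algebra.TensorProduct.tmul_mul_tmul, one_mul,
      ← TensorProduct.tmul_sum]
    rw [mul_antipode_coefMat b h, Matrix.one_apply]
    split <;> simp [Algebra.TensorProduct.one_def]
  have hMN' : M * (M2' * M1') = 1 := by
    rw [hM, mul_assoc, ← mul_assoc M2, hM2, one_mul, hM1]
  have hfin : N = M2' * M1' := by
    calc N = N * (M * (M2' * M1')) := by rw [hMN', mul_one]
    _ = (N * M) * (M2' * M1') := by rw [mul_assoc]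
    _ = M2' * M1' := by rw [hNM, one_mul]
  have h2 : Coalgebra.comul (R := K) (S (c i j)) = ∑ t, M2' i t * M1' t j := by
    rw [← Matrix.mul_apply, ← hfin]
  rw [h2]
  exact Finset.sum_congr rfl fun t _ => by
    have he : M2' i t * M1' t j = ((1 : A) ⊗ₜ[K] S (c i t)) * (S (c t j) ⊗ₜ[K] (1 : A)) := rfl
    rw [he, Algebra.TensorProduct.tmul_mul_tmul, one_mul, mul_one]

lemma integral_smul_sum {wG : Module.Dual K A} (hwG : IsNormalizedIntegral wG)
    {P : Type} (s : Finset P) (u v : P → A) {y : A}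
    (hy : Coalgebra.comul (R := K) y = ∑ p ∈ s, u p ⊗ₜ v p) :
    ∑ p ∈ s, wG (v p) • u p = wG y • (1 : A) := by
  rw [← sub_eq_zero, ← Module.forall_dual_apply_eq_zero_iff K]
  intro w
  rw [map_sub, sub_eq_zero]
  have h2 := DFunLike.congr_fun (hwG.2 w).1 y
  unfold conv at h2
  rw [LinearMap.comp_apply, LinearMap.comp_apply, hy, map_sum, map_sum] at h2
  simp only [TensorProduct.map_tmul, LinearMap.mul'_apply, LinearMap.smul_apply,
    smul_eq_mul] at h2
  simp only [map_sum, map_smul, smul_eq_mul, map_one]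
  rw [Finset.sum_congr rfl (fun p _ => mul_comm (wG (v p)) (w (u p))), h2]
  ring
end Helpers2

section Helpers3
variable {K : Type} [Field K] {A : Type} [CommRing A] [HopfAlgebra K A]

lemma repr_sum_smul {V : Type} [AddCommGroup V] [Module K V] {ι : Type} [Fintype ι]
    [DecidableEq ι] (b : Module.Basis ι K V) (t : ι → K) (q : ι) :
    b.repr (∑ p, t p • b p) q = t q := by
  simp [Finsupp.single_apply, Finset.sum_ite_eq']

lemma star_identity {wG : Module.Dual K A} (hwG : IsNormalizedIntegral wG)
    {V : Type} [AddCommGroup V] [Module K V] {ι : Type} [Fintype ι] [DecidableEq ι]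
    (bV : Module.Basis ι K V) {ρV : V →ₗ[K] V ⊗[K] A} (hV : IsComodule ρV)
    {W : Type} [AddCommGroup W] [Module K W] {κ : Type} [Fintype κ] [DecidableEq κ]
    (bW : Module.Basis κ K W) {ρW : W →ₗ[K] W ⊗[K] A} (hW : IsComodule ρW)
    (l : κ) (j : ι) (m : κ) (i : ι) :
    ∑ k, wG (coefMat bW ρW k l * HopfAlgebra.antipode (R := K) (coefMat bV ρV j i)) •
        coefMat bW ρW m k =
      ∑ t, wG (coefMat bW ρW m l * HopfAlgebra.antipode (R := K) (coefMat bV ρV j t)) •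
        coefMat bV ρV t i := by
  set S : A →ₗ[K] A := HopfAlgebra.antipode (R := K) with hS
  set c := coefMat bW ρW with hc
  set a := coefMat bV ρV with ha
  have hy : ∀ t : ι, Coalgebra.comul (R := K) (c m l * S (a j t)) =
      ∑ p : κ × ι, (c m p.1 * S (a p.2 t)) ⊗ₜ (c p.1 l * S (a j p.2)) := by
    intro t
    rw [Bialgebra.comul_mul, comul_coefMat bW hW m l, comul_antipode_coefMat bV hV j t,
      Finset.sum_mul_sum, Fintype.sum_prod_type]
    exact Finset.sum_congr rfl fun k _ => Finset.sum_congr rfl fun s _ => by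
      rw [Algebra.TensorProduct.tmul_mul_tmul]
  have hinv : ∀ t : ι, ∑ p : κ × ι, wG (c p.1 l * S (a j p.2)) • (c m p.1 * S (a p.2 t)) =
      wG (c m l * S (a j t)) • (1 : A) :=
    fun t => integral_smul_sum hwG Finset.univ _ _ (hy t)
  calc ∑ k, wG (c k l * S (a j i)) • c m k
      = ∑ p : κ × ι, wG (c p.1 l * S (a j p.2)) •
          (c m p.1 * ((if p.2 = i then 1 else 0) : A)) := by
        rw [Fintype.sum_prod_type]
        simp [mul_ite, mul_one, mul_zero, smul_ite, Finset.sum_ite_eq']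
    _ = ∑ p : κ × ι, wG (c p.1 l * S (a j p.2)) • (c m p.1 * ∑ t, S (a p.2 t) * a t i) := by
        simp_rw [hS, ha, antipode_mul_coefMat bV hV]
    _ = ∑ t, (∑ p : κ × ι, wG (c p.1 l * S (a j p.2)) • (c m p.1 * S (a p.2 t))) * a t i := by
        simp_rw [Finset.mul_sum, Finset.smul_sum, Finset.sum_mul, smul_mul_assoc, mul_assoc]
        rw [Finset.sum_comm]
    _ = ∑ t, (wG (c m l * S (a j t)) • (1 : A)) * a t i := by simp_rw [hinv]
    _ = ∑ t, wG (c m l * S (a j t)) • a t i := by simp [smul_mul_assoc]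
end Helpers3

lemma sum_reorg {K : Type} [Field K] {A : Type} [CommRing A] [HopfAlgebra K A]
    {ιa ιb ιc : Type} [Fintype ιa] [Fintype ιb] [Fintype ιc]
    (w : ιa → ιb → ιc → K) (r : ιb → ιc → K) (d : ιa → A) :
    ∑ k, (∑ l, ∑ j, w k l j * r l j) • d k = ∑ l, ∑ j, r l j • ∑ k, w k l j • d k := by
  simp_rw [Finset.sum_smul, Finset.smul_sum, smul_smul]
  rw [Finset.sum_comm]
  exact Finset.sum_congr rfl fun l _ => by
    rw [Finset.sum_comm]
    exact Finset.sum_congr rfl fun j _ => Finset.sum_congr rfl fun k _ => by rw [mul_comm]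

/-- If `w_G` is a normalized invariant integral on `G = Spec A`, then for all
finite-dimensional `A`-comodules `(V, ρ_V)` and `(W, ρ_W)`,
`w_G(S(χ_V) χ_W) = dim_K Hom^G(V, W)`. -/
theorem integral_char_mul_char_eq_dim_homG (wG : Module.Dual K A)
    (hwG : IsNormalizedIntegral wG) :
    ∀ (V : Type) [AddCommGroup V] [Module K V] [FiniteDimensional K V]
      (W : Type) [AddCommGroup W] [Module K W] [FiniteDimensional K W]
      (ρV : V →ₗ[K] V ⊗[K] A) (ρW : W →ₗ[K] W ⊗[K] A),
      IsComodule ρV → IsComodule ρW →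
        ∀ (ι : Type) [Fintype ι] (bV : Module.Basis ι K V) (κ : Type) [Fintype κ] (bW : Module.Basis κ K W),
          wG (HopfAlgebra.antipode (R := K) (charOf bV ρV) * charOf bW ρW) =
            (Module.finrank K (homG ρV ρW) : K) := by
  intro V _ _ _ W _ _ _ ρV ρW hV hW ι _ bV κ _ bW
  classical
  set S : A →ₗ[K] A := HopfAlgebra.antipode (R := K) with hS
  set a := coefMat bV ρV with ha
  set c := coefMat bW ρW with hc
  set bE : Module.Basis (κ × ι) K (V →ₗ[K] W) := bV.linearMap bW with hbE
  set P : (V →ₗ[K] W) →ₗ[K] (V →ₗ[K] W) :=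
    ∑ k : κ, ∑ i : ι, ∑ l : κ, ∑ j : ι,
      wG (c k l * S (a j i)) •
        (((bW.coord l) ∘ₗ LinearMap.applyₗ (R := K) (bV j)).smulRight (bE (k, i))) with hP
  have hPapp : ∀ (f : V →ₗ[K] W) (i' : ι), P f (bV i') =
      ∑ k, (∑ l, ∑ j, wG (c k l * S (a j i')) * bW.repr (f (bV j)) l) • bW k := by
    intro f i'
    have happly : ∀ (v : V) (g : V →ₗ[K] W), LinearMap.applyₗ (R := K) v g = g v := fun _ _ => rfl
    rw [hP]
    simp only [LinearMap.sum_apply, LinearMap.smul_apply, LinearMap.smulRight_apply,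
      LinearMap.comp_apply, happly, Module.Basis.coord_apply,
      Module.Basis.linearMap_apply_apply]
    simp only [hbE, Module.Basis.linearMap_apply_apply]
    simp only [smul_ite, smul_zero, Finset.sum_ite_irrel, Finset.sum_const_zero,
      Finset.sum_ite_eq, Finset.sum_ite_eq', Finset.mem_univ, if_true]
    simp only [smul_smul, ← Finset.sum_smul]
  have key : ∀ (r : κ → ι → K) (m : κ) (i : ι),
      ∑ k, (∑ l, ∑ j, wG (c k l * S (a j i)) * r l j) • c m k =
      ∑ t, (∑ l, ∑ j, wG (c m l * S (a j t)) * r l j) • a t i := by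
    intro r m i
    rw [sum_reorg (fun k l j => wG (c k l * S (a j i))) r (fun k => c m k),
      sum_reorg (fun t l j => wG (c m l * S (a j t))) r (fun t => a t i)]
    exact Finset.sum_congr rfl fun l _ => Finset.sum_congr rfl fun j _ =>
      congrArg _ (star_identity hwG bV hV bW hW l j m i)
  have hmem : ∀ f, P f ∈ homG ρV ρW := by
    intro f
    show ρW ∘ₗ (P f) = ((P f).rTensor A) ∘ₗ ρV
    apply bV.ext
    intro i
    rw [LinearMap.comp_apply, LinearMap.comp_apply, hPapp f i, rho_basis bV ρV i, map_sum,
      map_sum]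
    have e1 : ∀ k : κ, ρW ((∑ l, ∑ j, wG (c k l * S (a j i)) * bW.repr (f (bV j)) l) • bW k) =
        ∑ m, bW m ⊗ₜ ((∑ l, ∑ j, wG (c k l * S (a j i)) * bW.repr (f (bV j)) l) • c m k) := by
      intro k
      rw [map_smul, rho_basis bW ρW k, Finset.smul_sum]
      exact Finset.sum_congr rfl fun m _ => (TensorProduct.tmul_smul _ _ _).symm
    have e2 : ∀ t : ι, ((P f).rTensor A) (bV t ⊗ₜ a t i) =
        ∑ m, bW m ⊗ₜ ((∑ l, ∑ j, wG (c m l * S (a j t)) * bW.repr (f (bV j)) l) • a t i) := by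
      intro t
      rw [LinearMap.rTensor_tmul, hPapp f t, TensorProduct.sum_tmul]
      exact Finset.sum_congr rfl fun m _ => by rw [TensorProduct.smul_tmul]
    rw [Finset.sum_congr rfl fun k _ => e1 k, Finset.sum_congr rfl fun t _ => e2 t,
      Finset.sum_comm]
    conv_rhs => rw [Finset.sum_comm]
    simp_rw [← TensorProduct.tmul_sum]
    exact Finset.sum_congr rfl fun m _ =>
      congrArg _ (key (fun l j => bW.repr (f (bV j)) l) m i)
  have hfix : ∀ f ∈ homG ρV ρW, P f = f := by
    intro f hf
    have hf' : ρW ∘ₗ f = (f.rTensor A) ∘ₗ ρV := hf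
    have hcond : ∀ (m : κ) (j : ι), ∑ l, bW.repr (f (bV j)) l • c m l =
        ∑ t, bW.repr (f (bV t)) m • a t j := by
      intro m j
      have h0 := LinearMap.congr_fun hf' (bV j)
      rw [LinearMap.comp_apply, LinearMap.comp_apply, rho_basis bV ρV j, map_sum] at h0
      conv_lhs at h0 => rw [show f (bV j) = ∑ l, bW.repr (f (bV j)) l • bW l from
        (Module.Basis.sum_repr bW _).symm]
      rw [map_sum] at h0
      rw [Finset.sum_congr rfl (fun (l : κ) (_ : l ∈ Finset.univ) => by
        rw [map_smul, rho_basis bW ρW l, Finset.smul_sum])] at h0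
      rw [show (∑ t : ι, (f.rTensor A) (bV t ⊗ₜ[K] a t j)) = ∑ t : ι, ∑ m : κ, (bW.repr (f (bV t)) m • bW m) ⊗ₜ[K] a t j from Finset.sum_congr rfl (fun (t : ι) (_ : t ∈ Finset.univ) => by
        rw [LinearMap.rTensor_tmul, ← TensorProduct.sum_tmul]
        exact congrArg (· ⊗ₜ[K] a t j) (Module.Basis.sum_repr bW (f (bV t))).symm)] at h0
      simp_rw [TensorProduct.smul_tmul, ← TensorProduct.tmul_smul] at h0
      rw [Finset.sum_comm] at h0
      conv_rhs at h0 => rw [Finset.sum_comm]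
      simp_rw [← TensorProduct.tmul_sum] at h0
      have := congrArg (coeff bW m A) h0
      rw [coeff_sum, coeff_sum] at this
      simpa using this
    apply bV.ext
    intro i
    rw [hPapp f i]
    have hin : ∀ k : κ, (∑ l, ∑ j, wG (c k l * S (a j i)) * bW.repr (f (bV j)) l) =
        bW.repr (f (bV i)) k := by
      intro k
      calc ∑ l, ∑ j, wG (c k l * S (a j i)) * bW.repr (f (bV j)) l
          = ∑ j, wG ((∑ l, bW.repr (f (bV j)) l • c k l) * S (a j i)) := by
            rw [Finset.sum_comm]
            exact Finset.sum_congr rfl fun j _ => by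
              rw [Finset.sum_mul, map_sum]
              exact Finset.sum_congr rfl fun l _ => by
                rw [smul_mul_assoc, map_smul, smul_eq_mul, mul_comm]
        _ = ∑ j, wG ((∑ t, bW.repr (f (bV t)) k • a t j) * S (a j i)) := by
            simp_rw [hcond k]
        _ = ∑ t, bW.repr (f (bV t)) k * wG (∑ j, a t j * S (a j i)) := by
            rw [Finset.sum_congr rfl (fun j (_ : j ∈ Finset.univ) => by
              rw [Finset.sum_mul, map_sum])]
            rw [Finset.sum_comm]
            exact Finset.sum_congr rfl fun t _ => by
              rw [map_sum, Finset.mul_sum]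
              exact Finset.sum_congr rfl fun j _ => by
                rw [smul_mul_assoc, map_smul, smul_eq_mul]
        _ = bW.repr (f (bV i)) k := by
            simp_rw [hS, ha, mul_antipode_coefMat bV hV]
            rw [Finset.sum_congr rfl (fun t (_ : t ∈ Finset.univ) => by
              rw [show wG (if t = i then (1:A) else 0) = if t = i then 1 else 0 by
                split <;> simp [hwG.1]])]
            simp [Finset.sum_ite_eq', mul_ite]
    rw [Finset.sum_congr rfl fun k _ => by rw [hin k]]
    exact Module.Basis.sum_repr bW (f (bV i))
  have hproj : LinearMap.IsProj (homG ρV ρW) P := ⟨hmem, hfix⟩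
  have htr := hproj.trace
  rw [← htr]
  have hPbE : ∀ q : κ × ι, P (bE q) = ∑ p : κ × ι, wG (c p.1 q.1 * S (a q.2 p.2)) • bE p := by
    intro q
    apply bV.ext
    intro i'
    rw [hPapp (bE q) i']
    have hrepr : ∀ (l : κ) (j : ι), bW.repr ((bE q) (bV j)) l =
        if q.2 = j then (if q.1 = l then 1 else 0) else 0 := by
      intro l j
      rw [hbE, Module.Basis.linearMap_apply_apply]
      split <;> simp [Finsupp.single_apply]
    simp_rw [hrepr]
    rw [LinearMap.sum_apply]
    simp only [LinearMap.smul_apply, hbE, Module.Basis.linearMap_apply_apply]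
    rw [Fintype.sum_prod_type]
    simp only [mul_ite, mul_one, mul_zero, Finset.sum_ite_eq, Finset.sum_ite_eq',
      Finset.mem_univ, if_true, smul_ite, smul_zero, Finset.sum_ite_irrel,
      Finset.sum_const_zero]
  have hdiag : ∀ q : κ × ι, (LinearMap.toMatrix bE bE P) q q = wG (c q.1 q.1 * S (a q.2 q.2)) := by
    intro q
    rw [LinearMap.toMatrix_apply, hPbE q, repr_sum_smul]
  rw [LinearMap.trace_eq_matrix_trace K bE P]
  have htrm : (LinearMap.toMatrix bE bE P).trace = ∑ k : κ, ∑ i : ι, wG (c k k * S (a i i)) := by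
    rw [Matrix.trace]
    rw [show (∑ q : κ × ι, ((LinearMap.toMatrix bE bE) P).diag q) =
      ∑ q : κ × ι, wG (c q.1 q.1 * S (a q.2 q.2)) from
        Finset.sum_congr rfl fun q _ => hdiag q]
    rw [Fintype.sum_prod_type]
  have hL : S (charOf bV ρV) * charOf bW ρW = ∑ k : κ, ∑ i : ι, c k k * S (a i i) := by
    have h1 : charOf bV ρV = ∑ i, a i i := rfl
    have h2 : charOf bW ρW = ∑ k, c k k := rfl
    rw [h1, h2, map_sum, Finset.sum_mul_sum, Finset.sum_comm]
    exact Finset.sum_congr rfl fun k _ => Finset.sum_congr rfl fun i _ => mul_comm _ _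
  rw [htrm, hL, map_sum]
  simp_rw [map_sum]



end
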